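/- For every M > 0 there exists C > 0 such that for all δ ∈ (0,1] and all z₊, z₋ ∈ [−M, M], the Lebesgue integral ∬_{[−M,M]×[−M,M]} ( |z₊ − δ·w₊| + |z₋ − w₋| )^{−1} dw₊ dw₋ is finite and bounded by C·(1 + |log(|z₊| + δ)|). -/

import Mathlib

open MeasureTheory

open Set intervalIntegral


private lemma loglb {x c : ℝ} (hx : 0 < x) (hc : 0 < c) :
    Real.log c - Real.log x ≤ 2 * Real.sqrt c * (Real.sqrt x)⁻¹ - 2 := by
  have h0 : (0:ℝ) < c / x := by positivity
  have h1 : Real.log (Real.sqrt (c / x)) ≤ Real.sqrt (c / x) - 1 :=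
    Real.log_le_sub_one_of_pos (Real.sqrt_pos.mpr h0)
  rw [Real.log_sqrt h0.le, Real.log_div hc.ne' hx.ne', Real.sqrt_div hc.le,
    div_eq_mul_inv (Real.sqrt c)] at h1
  linarith

private lemma ii_invsqrt (a b : ℝ) :
    IntervalIntegrable (fun u => (Real.sqrt |u|)⁻¹) volume a b := by
  have key : ∀ c : ℝ, 0 ≤ c →
      IntervalIntegrable (fun u : ℝ => (Real.sqrt |u|)⁻¹) volume 0 c := by
    intro c hc
    have hrpow : IntervalIntegrable (fun x : ℝ => x ^ (-(1/2) : ℝ)) volume 0 c :=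
      intervalIntegrable_rpow' (by norm_num)
    refine hrpow.mono_fun ?_ ?_
    · exact ((Real.continuous_sqrt.measurable.comp measurable_abs).inv).aestronglyMeasurable
    · filter_upwards [ae_restrict_mem measurableSet_uIoc] with u hu
      rw [Set.uIoc_of_le hc] at hu
      have hu0 : 0 < u := hu.1
      rw [Real.norm_eq_abs, Real.norm_eq_abs, abs_of_pos hu0,
        Real.rpow_neg hu0.le, ← Real.sqrt_eq_rpow]
  have keyc : ∀ c : ℝ, IntervalIntegrable (fun u : ℝ => (Real.sqrt |u|)⁻¹) volume 0 c := by
    intro c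
    rcases le_or_gt 0 c with h | h
    · exact key c h
    · have h2 := ((IntervalIntegrable.iff_comp_neg).mp (key (-c) (by linarith)))
      have hfe : (fun x : ℝ => (Real.sqrt |(-x)|)⁻¹) = fun u : ℝ => (Real.sqrt |u|)⁻¹ := by
        funext x; rw [abs_neg]
      rw [hfe] at h2
      simpa using h2
  exact (keyc a).symm.trans (keyc b)

private lemma ii_log (a b : ℝ) : IntervalIntegrable Real.log volume a b := by
  have key : ∀ c : ℝ, 0 ≤ c → IntervalIntegrable Real.log volume 0 c := by
    intro c hc
    have hg : IntervalIntegrable (fun u : ℝ => 2 * (Real.sqrt |u|)⁻¹ + c) volume 0 c :=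
      ((ii_invsqrt 0 c).const_mul 2).add (intervalIntegrable_const)
    refine IntervalIntegrable.mono_fun' hg ?_ ?_
    · exact Real.measurable_log.aestronglyMeasurable
    · filter_upwards [ae_restrict_mem measurableSet_uIoc] with u hu
      rw [Set.uIoc_of_le hc] at hu
      have hu0 : 0 < u := hu.1
      have hsq : 0 ≤ (Real.sqrt u)⁻¹ := by positivity
      rw [Real.norm_eq_abs, abs_of_pos hu0]
      rcases le_or_gt u 1 with h1 | h1
      · have := loglb hu0 one_pos
        rw [Real.log_one, Real.sqrt_one] at this
        have hlu : Real.log u ≤ 0 := Real.log_nonpos hu0.le h1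
        rw [abs_of_nonpos hlu]
        linarith
      · have hlu : 0 ≤ Real.log u := Real.log_nonneg h1.le
        rw [abs_of_nonneg hlu]
        have h2 : Real.log u ≤ u - 1 := Real.log_le_sub_one_of_pos hu0
        have h3 : u ≤ c := hu.2
        nlinarith
  have keyc : ∀ c : ℝ, IntervalIntegrable Real.log volume 0 c := by
    intro c
    rcases le_or_gt 0 c with h | h
    · exact key c h
    · have h2 := ((IntervalIntegrable.iff_comp_neg).mp (key (-c) (by linarith)))
      have hfe : (fun x : ℝ => Real.log (-x)) = Real.log := by
        funext x; rw [Real.log_neg_eq_log]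
      rw [hfe] at h2
      simpa using h2
  exact (keyc a).symm.trans (keyc b)

private lemma ii_logaffine {zp δ : ℝ} (hδ : δ ≠ 0) (a b : ℝ) :
    IntervalIntegrable (fun w => Real.log (zp - δ * w)) volume a b := by
  have h1 := (ii_log (zp - δ * a) (zp - δ * b)).comp_sub_left zp
  simp only [sub_sub_cancel] at h1
  have h2 := h1.comp_mul_left (c := δ)
  rw [mul_div_cancel_left₀ _ hδ, mul_div_cancel_left₀ _ hδ] at h2
  exact h2

private lemma int_invsqrt {R : ℝ} (hR : 0 ≤ R) :
    ∫ u in (-R)..R, (Real.sqrt |u|)⁻¹ = 4 * Real.sqrt R := by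
  have hr : ∫ u in (0:ℝ)..R, (Real.sqrt |u|)⁻¹ = 2 * Real.sqrt R := by
    rw [intervalIntegral.integral_congr (g := fun u : ℝ => u ^ (-(1/2) : ℝ)) ?_]
    · rw [integral_rpow (Or.inl (by norm_num))]
      norm_num
      rw [← Real.sqrt_eq_rpow]
      ring
    · intro u hu
      rw [Set.uIcc_of_le hR] at hu
      rcases eq_or_lt_of_le hu.1 with h0 | h0
      · simp [← h0, Real.zero_rpow (by norm_num : (-(1/2):ℝ) ≠ 0)]
      · simp only
        rw [abs_of_pos h0, Real.rpow_neg h0.le, ← Real.sqrt_eq_rpow]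
  have hl : ∫ u in (-R)..(0:ℝ), (Real.sqrt |u|)⁻¹ = 2 * Real.sqrt R := by
    have hfe : (fun u : ℝ => (Real.sqrt |u|)⁻¹) = (fun u : ℝ => (Real.sqrt |(-u)|)⁻¹) := by
      funext u; rw [abs_neg]
    rw [hfe, intervalIntegral.integral_comp_neg (fun u : ℝ => (Real.sqrt |u|)⁻¹)]
    rw [neg_zero, neg_neg]
    exact hr
  rw [← intervalIntegral.integral_add_adjacent_intervals (ii_invsqrt (-R) 0) (ii_invsqrt 0 R),
    hr, hl]
  ring

private lemma inner_bd {M a zm : ℝ} (hM : 0 < M) (ha : 0 < a) (hzm : zm ∈ Set.Icc (-M) M) :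
    ∫ t in Set.Icc (-M) M, (a + |zm - t|)⁻¹ ≤ 2 * (Real.log (a + 2*M) - Real.log a) := by
  obtain ⟨hzm1, hzm2⟩ := hzm
  have hMM : -M ≤ M := by linarith
  have hcont : Continuous (fun s : ℝ => (a + |zm - s|)⁻¹) := by
    apply Continuous.inv₀
    · exact continuous_const.add ((continuous_const.sub continuous_id).abs)
    · intro x; positivity
  have h0 : ∫ t in Set.Icc (-M) M, (a + |zm - t|)⁻¹ = ∫ t in (-M)..M, (a + |zm - t|)⁻¹ := by
    rw [intervalIntegral.integral_of_le hMM, MeasureTheory.integral_Icc_eq_integral_Ioc]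
  have h1 : ∫ t in (-M)..M, (a + |zm - t|)⁻¹ = ∫ s in (zm - M)..(zm + M), (a + |s|)⁻¹ := by
    have := intervalIntegral.integral_comp_sub_left (a := -M) (b := M)
      (fun s : ℝ => (a + |s|)⁻¹) zm
    rw [this]; ring_nf
  have hcont2 : Continuous (fun s : ℝ => (a + |s|)⁻¹) := by
    apply Continuous.inv₀
    · exact continuous_const.add continuous_abs
    · intro x; positivity
  have h2 : ∫ s in (zm - M)..(zm + M), (a + |s|)⁻¹ ≤ ∫ s in (-(2*M))..(2*M), (a + |s|)⁻¹ := by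
    rw [intervalIntegral.integral_of_le (by linarith), intervalIntegral.integral_of_le (by linarith)]
    apply setIntegral_mono_set
    · exact (hcont2.integrableOn_Ioc)
    · filter_upwards with s using by positivity
    · exact Filter.Eventually.of_forall (Set.Ioc_subset_Ioc (by linarith) (by linarith))
  have hne : (0:ℝ) ∉ Set.uIcc a (a + 2*M) := by
    rw [Set.uIcc_of_le (by linarith)]
    rintro ⟨h', _⟩; linarith
  have hval : ∫ s in (-(2*M))..(2*M), (a + |s|)⁻¹ = 2 * (Real.log (a + 2*M) - Real.log a) := by
    have hright : ∫ s in (0:ℝ)..(2*M), (a + |s|)⁻¹ = Real.log (a + 2*M) - Real.log a := by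
      rw [intervalIntegral.integral_congr (g := fun s : ℝ => (fun x => x⁻¹) (a + s)) ?_]
      · rw [intervalIntegral.integral_comp_add_left (fun x : ℝ => x⁻¹) a, add_zero,
          integral_inv hne, Real.log_div (by positivity) (by positivity)]
      · intro s hs
        rw [Set.uIcc_of_le (by linarith)] at hs
        simp only
        rw [abs_of_nonneg hs.1]
    have hleft : ∫ s in (-(2*M))..(0:ℝ), (a + |s|)⁻¹ = Real.log (a + 2*M) - Real.log a := by
      rw [intervalIntegral.integral_congr (g := fun s : ℝ => (fun x => x⁻¹) (a - s)) ?_]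
      · rw [intervalIntegral.integral_comp_sub_left (fun x : ℝ => x⁻¹) a, sub_zero, sub_neg_eq_add,
          integral_inv hne, Real.log_div (by positivity) (by positivity)]
      · intro s hs
        rw [Set.uIcc_of_le (by linarith)] at hs
        simp only
        rw [abs_of_nonpos hs.2]
        ring_nf
    rw [← intervalIntegral.integral_add_adjacent_intervals (f := fun s : ℝ => (a + |s|)⁻¹)
      ((hcont2.intervalIntegrable _ _)) ((hcont2.intervalIntegrable _ _)) (b := 0),
      hright, hleft]
    ring
  rw [h0, h1, ← hval]
  exact h2

set_option maxHeartbeats 1000000 in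
/-- For every M > 0 there is C > 0 such that for all δ ∈ (0,1] and
z₊, z₋ ∈ [−M,M], the integral ∬_{[−M,M]²} (|z₊ − δw₊| + |z₋ − w₋|)⁻¹ dw₊ dw₋ is finite
and bounded by C·(1 + |log(|z₊| + δ)|). -/
theorem stmt9 : ∀ M : ℝ, 0 < M → ∃ C : ℝ, 0 < C ∧
    ∀ δ ∈ Set.Ioc (0:ℝ) 1, ∀ zp ∈ Set.Icc (-M) M, ∀ zm ∈ Set.Icc (-M) M,
      IntegrableOn (fun w : ℝ × ℝ => (|zp - δ * w.1| + |zm - w.2|)⁻¹)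
        (Set.Icc (-M) M ×ˢ Set.Icc (-M) M) ∧
      (∫ w in Set.Icc (-M) M ×ˢ Set.Icc (-M) M,
          (|zp - δ * w.1| + |zm - w.2|)⁻¹)
        ≤ C * (1 + |Real.log (|zp| + δ)|) := by
  intro M hM
  obtain ⟨KA, hKA⟩ : ∃ x : ℝ,
      x = 4*M*Real.log (4*M) - 4*M*Real.log (3*M) + 4*M*Real.log (2*M+1) + 40*M := ⟨_, rfl⟩
  obtain ⟨KB, hKB⟩ : ∃ x : ℝ,
      x = 4*M*Real.log (4*M) + 4*M*Real.log 2 + 4*M*Real.log (1+1/(2*M)) := ⟨_, rfl⟩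
  obtain ⟨C, hC⟩ : ∃ x : ℝ, x = |KA| + |KB| + 4*M + 1 := ⟨_, rfl⟩
  refine ⟨C, by rw [hC]; positivity, ?_⟩
  rintro δ ⟨hδ0, hδ1⟩ zp hzp zm hzm
  have hδne : δ ≠ 0 := hδ0.ne'
  have hMM : -M ≤ M := by linarith
  set s : Set ℝ := Set.Icc (-M) M with hs
  obtain ⟨t, htdef⟩ : ∃ x : ℝ, x = |zp| + δ := ⟨_, rfl⟩
  rw [show |zp| + δ = t from htdef.symm]
  have ht0 : 0 < t := by rw [htdef]; positivity
  set G : ℝ → ℝ := fun w => 2 * (Real.log (|zp - δ * w| + 2*M) - Real.log (zp - δ * w)) with hG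
  -- integrability of the pieces of G
  have hIG1 : IntegrableOn (fun w => Real.log (|zp - δ * w| + 2*M)) s volume := by
    apply Continuous.integrableOn_Icc
    apply Continuous.log
    · exact ((continuous_const.sub (continuous_const.mul continuous_id)).abs).add continuous_const
    · intro x; positivity
  have hIG2 : IntegrableOn (fun w => Real.log (zp - δ * w)) s volume :=
    (intervalIntegrable_iff_integrableOn_Icc_of_le hMM).mp (ii_logaffine hδne _ _)
  have hIG : IntegrableOn G s volume := (hIG1.sub hIG2).const_mul 2
  -- null sets
  have hae : ∀ᵐ w : ℝ, zp - δ * w ≠ 0 := by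
    rw [Filter.Eventually]
    rw [show {w : ℝ | zp - δ * w ≠ 0} ∈ ae volume ↔
        volume {w : ℝ | ¬ (zp - δ * w ≠ 0)} = 0 from mem_ae_iff]
    refine measure_mono_null (fun w hw => ?_) (measure_singleton (zp / δ))
    simp only [Set.mem_setOf_eq, not_not] at hw
    have : w = zp / δ := by field_simp; linarith
    simpa using this
  have habove : ∀ w ∈ s, |zp - δ * w| ≤ 2 * M := by
    intro w hw
    have h1 : |zp| ≤ M := abs_le.mpr hzp
    have h2 : |w| ≤ M := abs_le.mpr hw
    have h3 : |zp - δ * w| ≤ |zp| + |δ * w| := abs_sub _ _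
    have h4 : |δ * w| = δ * |w| := by rw [abs_mul, abs_of_pos hδ0]
    nlinarith
  have hpos : ∀ (w1 w2 : ℝ), (0:ℝ) ≤ (|zp - δ * w1| + |zm - w2|)⁻¹ := by
    intro w1 w2; positivity
  -- measurability
  have hmeas : Measurable (fun w : ℝ × ℝ => (|zp - δ * w.1| + |zm - w.2|)⁻¹) :=
    (((measurable_const.sub (measurable_fst.const_mul δ)).abs).add
      ((measurable_const.sub measurable_snd).abs)).inv
  have hprod : (volume : Measure (ℝ × ℝ)).restrict (s ×ˢ s)
      = (volume.restrict s).prod (volume.restrict s) := by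
    rw [Measure.volume_eq_prod, Measure.prod_restrict]
  have hfae : AEStronglyMeasurable (fun w : ℝ × ℝ => (|zp - δ * w.1| + |zm - w.2|)⁻¹)
      ((volume.restrict s).prod (volume.restrict s)) := hmeas.aestronglyMeasurable
  -- inner integrability and bound
  have hinner_int : ∀ w1 : ℝ, zp - δ * w1 ≠ 0 →
      IntegrableOn (fun w2 => (|zp - δ * w1| + |zm - w2|)⁻¹) s volume := by
    intro w1 hw1
    apply Continuous.integrableOn_Icc
    apply Continuous.inv₀
    · exact continuous_const.add ((continuous_const.sub continuous_id).abs)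
    · intro x
      have : 0 < |zp - δ * w1| := abs_pos.mpr hw1
      positivity
  have hinner_bd : ∀ w1 ∈ s, zp - δ * w1 ≠ 0 →
      (∫ w2 in s, (|zp - δ * w1| + |zm - w2|)⁻¹) ≤ G w1 := by
    intro w1 _ hne
    have ha : 0 < |zp - δ * w1| := abs_pos.mpr hne
    have h := inner_bd hM ha hzm
    rw [hG]; dsimp only
    rw [← Real.log_abs (zp - δ * w1)]
    exact h
  -- integrability of the norm-inner-integral
  have hnorm_eq : (fun w1 => ∫ w2, ‖(|zp - δ * w1| + |zm - w2|)⁻¹‖ ∂(volume.restrict s))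
      = fun w1 => ∫ w2 in s, (|zp - δ * w1| + |zm - w2|)⁻¹ := by
    funext w1
    apply MeasureTheory.integral_congr_ae
    filter_upwards with w2
    rw [Real.norm_eq_abs, abs_of_nonneg (hpos w1 w2)]
  have hnorm_int : Integrable
      (fun w1 => ∫ w2, ‖(|zp - δ * w1| + |zm - w2|)⁻¹‖ ∂(volume.restrict s))
      (volume.restrict s) := by
    apply Integrable.mono' hIG (hfae.norm.integral_prod_right')
    filter_upwards [ae_restrict_mem measurableSet_Icc, ae_restrict_of_ae hae] with w1 hw1 hne
    have e : (∫ y in s, ‖(|zp - δ * w1| + |zm - y|)⁻¹‖) = ∫ y in s, (|zp - δ * w1| + |zm - y|)⁻¹ := by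
      apply MeasureTheory.integral_congr_ae
      filter_upwards with y
      rw [Real.norm_eq_abs, abs_of_nonneg (hpos w1 y)]
    rw [e, Real.norm_eq_abs, abs_of_nonneg (integral_nonneg (fun w2 => hpos w1 w2))]
    exact hinner_bd w1 hw1 hne
  have hINT : IntegrableOn (fun w : ℝ × ℝ => (|zp - δ * w.1| + |zm - w.2|)⁻¹) (s ×ˢ s) := by
    rw [IntegrableOn, hprod, integrable_prod_iff hfae]
    constructor
    · filter_upwards [ae_restrict_of_ae hae] with w1 hne
      exact hinner_int w1 hne
    · exact hnorm_int
  refine ⟨hINT, ?_⟩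
  have hton : (∫ w in s ×ˢ s, (|zp - δ * w.1| + |zm - w.2|)⁻¹)
      = ∫ w1 in s, ∫ w2 in s, (|zp - δ * w1| + |zm - w2|)⁻¹ := by
    rw [Measure.volume_eq_prod]
    exact setIntegral_prod _ (by rwa [IntegrableOn, ← Measure.volume_eq_prod] )
  rw [hton]
  have hstep1 : (∫ w1 in s, ∫ w2 in s, (|zp - δ * w1| + |zm - w2|)⁻¹) ≤ ∫ w1 in s, G w1 := by
    apply integral_mono_ae (hnorm_eq ▸ hnorm_int) hIG
    filter_upwards [ae_restrict_mem measurableSet_Icc, ae_restrict_of_ae hae] with w1 hw1 hne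
    exact hinner_bd w1 hw1 hne
  have hvol : (volume s).toReal = 2 * M := by
    rw [hs, Real.volume_Icc, ENNReal.toReal_ofReal (by linarith)]
    ring
  refine le_trans hstep1 ?_
  -- split ∫ G
  have hsplit : (∫ w1 in s, G w1)
      = 2 * ((∫ w1 in s, Real.log (|zp - δ * w1| + 2*M)) - ∫ w1 in s, Real.log (zp - δ * w1)) := by
    rw [hG]
    rw [MeasureTheory.integral_const_mul]
    rw [MeasureTheory.integral_sub hIG1 hIG2]
  -- P1 bound
  have hP1 : (∫ w1 in s, Real.log (|zp - δ * w1| + 2*M)) ≤ 2 * M * Real.log (4*M) := by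
    have hconst : IntegrableOn (fun _ : ℝ => Real.log (4*M)) s volume := by
      apply (integrableOn_const_iff).mpr
      right
      rw [hs, Real.volume_Icc]
      exact ENNReal.ofReal_lt_top
    have hb := setIntegral_mono_on hIG1 hconst measurableSet_Icc
      (fun w1 hw1 => Real.log_le_log (by positivity) (by linarith [habove w1 hw1]))
    calc (∫ w1 in s, Real.log (|zp - δ * w1| + 2*M))
        ≤ ∫ _ in s, Real.log (4*M) := hb
      _ = 2 * M * Real.log (4*M) := by
          rw [setIntegral_const, measureReal_def, hvol, smul_eq_mul]
  -- substitution for P2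
  have hsub : (∫ w1 in s, Real.log (zp - δ * w1))
      = δ⁻¹ * ∫ u in (zp - δ*M)..(zp + δ*M), Real.log u := by
    rw [hs, MeasureTheory.integral_Icc_eq_integral_Ioc, ← intervalIntegral.integral_of_le hMM]
    have h1 := intervalIntegral.integral_comp_mul_left (a := -M) (b := M)
      (fun x => Real.log (zp - x)) hδne
    have h2 := intervalIntegral.integral_comp_sub_left (a := δ * -M) (b := δ * M) Real.log zp
    rw [h1, h2, smul_eq_mul]
    have e1 : zp - δ * M = zp - δ * M := rfl
    have e2 : zp - δ * -M = zp + δ * M := by ring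
    rw [e2]
  have hMC : 4*M ≤ C := by
    rw [hC]; have := abs_nonneg KA; have := abs_nonneg KB; linarith
  have eC : C*(1+|Real.log t|) = C + C*|Real.log t| := by ring
  have e3 : 4*M*|Real.log t| ≤ C*|Real.log t| :=
    mul_le_mul_of_nonneg_right hMC (abs_nonneg _)
  rcases le_or_gt (|zp|) (2*δ*M) with hcase | hcase
  · -- Case A : |zp| ≤ 2δM
    set r : ℝ := δ * M with hr
    have hr0 : 0 < r := by positivity
    have h3r : (0:ℝ) < 3 * r := by positivity
    have hzp2r : |zp| ≤ 2 * r := by rw [hr]; linarith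
    have hae0 : ∀ᵐ u : ℝ, u ≠ 0 := by
      rw [Filter.Eventually, show {u : ℝ | u ≠ 0} ∈ ae volume ↔
          volume {u : ℝ | ¬ u ≠ 0} = 0 from mem_ae_iff]
      refine measure_mono_null (fun u hu => ?_) (measure_singleton 0)
      simpa using hu
    have hm_int : IntervalIntegrable
        (fun u : ℝ => (Real.log (3*r) + 2) - (2*Real.sqrt (3*r)) * (Real.sqrt |u|)⁻¹)
        volume (zp - r) (zp + r) :=
      intervalIntegrable_const.sub ((ii_invsqrt _ _).const_mul _)
    have hmono : (∫ u in (zp - r)..(zp + r),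
          ((Real.log (3*r) + 2) - (2*Real.sqrt (3*r)) * (Real.sqrt |u|)⁻¹))
        ≤ ∫ u in (zp - r)..(zp + r), Real.log u := by
      apply intervalIntegral.integral_mono_ae_restrict (by linarith) hm_int (ii_log _ _)
      filter_upwards [ae_restrict_of_ae hae0] with u hu
      show (Real.log (3*r) + 2) - (2*Real.sqrt (3*r)) * (Real.sqrt |u|)⁻¹ ≤ Real.log u
      have habs : 0 < |u| := abs_pos.mpr hu
      have hlb := loglb habs h3r
      rw [← Real.log_abs u]
      linarith
    have hsplit_m : (∫ u in (zp - r)..(zp + r),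
          ((Real.log (3*r) + 2) - (2*Real.sqrt (3*r)) * (Real.sqrt |u|)⁻¹))
        = (2*r) * (Real.log (3*r) + 2)
          - (2*Real.sqrt (3*r)) * ∫ u in (zp - r)..(zp + r), (Real.sqrt |u|)⁻¹ := by
      rw [intervalIntegral.integral_sub intervalIntegrable_const ((ii_invsqrt _ _).const_mul _),
        intervalIntegral.integral_const, intervalIntegral.integral_const_mul, smul_eq_mul,
        show zp + r - (zp - r) = 2*r from by ring]
    have hIb : (∫ u in (zp - r)..(zp + r), (Real.sqrt |u|)⁻¹) ≤ 4 * Real.sqrt (3*r) := by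
      have hint_big : IntegrableOn (fun u : ℝ => (Real.sqrt |u|)⁻¹) (Set.Ioc (-(3*r)) (3*r)) volume :=
        (intervalIntegrable_iff_integrableOn_Ioc_of_le (by linarith)).mp (ii_invsqrt _ _)
      have hzpa := abs_le.mp hzp2r
      calc (∫ u in (zp - r)..(zp + r), (Real.sqrt |u|)⁻¹)
          = ∫ u in Set.Ioc (zp - r) (zp + r), (Real.sqrt |u|)⁻¹ :=
            intervalIntegral.integral_of_le (by linarith)
        _ ≤ ∫ u in Set.Ioc (-(3*r)) (3*r), (Real.sqrt |u|)⁻¹ := by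
            apply setIntegral_mono_set hint_big
            · filter_upwards with u using by positivity
            · exact (Set.Ioc_subset_Ioc (by linarith) (by linarith)).eventuallyLE
        _ = ∫ u in (-(3*r))..(3*r), (Real.sqrt |u|)⁻¹ :=
            (intervalIntegral.integral_of_le (by linarith)).symm
        _ = 4 * Real.sqrt (3*r) := int_invsqrt h3r.le
    have hsqr : Real.sqrt (3*r) * Real.sqrt (3*r) = 3*r := Real.mul_self_sqrt h3r.le
    have h6 : (2*Real.sqrt (3*r)) * (4*Real.sqrt (3*r)) = 24 * r := by
      rw [show (2*Real.sqrt (3*r)) * (4*Real.sqrt (3*r))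
          = 8*(Real.sqrt (3*r)*Real.sqrt (3*r)) from by ring, hsqr]
      ring
    have h5 : (2*Real.sqrt (3*r)) * (∫ u in (zp - r)..(zp + r), (Real.sqrt |u|)⁻¹)
        ≤ 24 * r := by
      calc (2*Real.sqrt (3*r)) * (∫ u in (zp - r)..(zp + r), (Real.sqrt |u|)⁻¹)
          ≤ (2*Real.sqrt (3*r)) * (4*Real.sqrt (3*r)) :=
            mul_le_mul_of_nonneg_left hIb (by positivity)
        _ = 24 * r := h6
    have hJ : (2*r) * Real.log (3*r) - 20*r ≤ ∫ u in (zp - r)..(zp + r), Real.log u := by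
      linarith [hmono, hsplit_m, h5]
    have hlog3r : Real.log (3*r) = Real.log δ + Real.log (3*M) := by
      rw [hr, show 3*(δ*M) = δ*(3*M) from by ring,
        Real.log_mul hδne (by positivity : (0:ℝ) < 3*M).ne']
    have hP2 : 2*M*(Real.log δ + Real.log (3*M)) - 20*M ≤ ∫ w1 in s, Real.log (zp - δ * w1) := by
      rw [hsub]
      have hdpos : (0:ℝ) ≤ δ⁻¹ := by positivity
      have hmul := mul_le_mul_of_nonneg_left hJ hdpos
      have heq : δ⁻¹ * ((2*r) * Real.log (3*r) - 20*r)
          = 2*M*(Real.log δ + Real.log (3*M)) - 20*M := by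
        rw [hlog3r, hr]; field_simp
      linarith
    have hlogδ : -Real.log δ ≤ |Real.log t| + Real.log (2*M+1) := by
      have h1 : t ≤ (2*M+1)*δ := by rw [htdef]; linarith
      have h2 : Real.log t ≤ Real.log ((2*M+1)*δ) := Real.log_le_log ht0 h1
      rw [Real.log_mul (by positivity : (0:ℝ) < 2*M+1).ne' hδne] at h2
      have h3 : -|Real.log t| ≤ Real.log t := neg_abs_le _
      linarith
    have e4 := mul_le_mul_of_nonneg_left hlogδ (by linarith : (0:ℝ) ≤ 4*M)
    have e1 : KA ≤ |KA| := le_abs_self _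
    have hCKA : |KA| ≤ C := by
      rw [hC]; have := abs_nonneg KB; linarith
    rw [hsplit]
    linarith [hP1, hP2, e4, e1, hCKA, e3, eC, hKA, abs_nonneg (Real.log t)]
  · -- Case B : 2δM < |zp|
    have hzp0 : 0 < |zp| := lt_trans (by positivity) hcase
    have hGbd : ∀ w1 ∈ s, G w1 ≤ 2*(Real.log (4*M) - (Real.log |zp| - Real.log 2)) := by
      intro w1 hw1
      have h2 : |δ * w1| ≤ δ * M := by
        rw [abs_mul, abs_of_pos hδ0]
        exact mul_le_mul_of_nonneg_left (abs_le.mpr hw1) hδ0.le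
      have hlow : |zp|/2 ≤ |zp - δ * w1| := by
        have h1 : |zp| - |δ * w1| ≤ |zp - δ * w1| := abs_sub_abs_le_abs_sub _ _
        linarith
      rw [hG]; dsimp only
      rw [← Real.log_abs (zp - δ * w1)]
      have hup : Real.log (|zp - δ*w1| + 2*M) ≤ Real.log (4*M) :=
        Real.log_le_log (by positivity) (by linarith [habove w1 hw1])
      have hlo : Real.log (|zp|/2) ≤ Real.log |zp - δ*w1| :=
        Real.log_le_log (by positivity) hlow
      rw [Real.log_div hzp0.ne' two_ne_zero] at hlo
      linarith
    have hintc : IntegrableOn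
        (fun _ : ℝ => 2*(Real.log (4*M) - (Real.log |zp| - Real.log 2))) s volume := by
      apply (integrableOn_const_iff).mpr
      right; rw [hs, Real.volume_Icc]; exact ENNReal.ofReal_lt_top
    have hB1 : (∫ w1 in s, G w1)
        ≤ 2*M * (2*(Real.log (4*M) - (Real.log |zp| - Real.log 2))) := by
      calc (∫ w1 in s, G w1)
          ≤ ∫ _ in s, 2*(Real.log (4*M) - (Real.log |zp| - Real.log 2)) :=
            setIntegral_mono_on hIG hintc measurableSet_Icc hGbd
        _ = _ := by rw [setIntegral_const, measureReal_def, hvol, smul_eq_mul]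
    have hlogzp : -Real.log |zp| ≤ |Real.log t| + Real.log (1 + 1/(2*M)) := by
      have hδle : δ ≤ |zp|/(2*M) := by
        rw [le_div_iff₀ (by positivity : (0:ℝ) < 2*M)]
        nlinarith
      have h1 : t ≤ |zp| * (1 + 1/(2*M)) := by
        rw [htdef]
        have e : |zp| * (1 + 1/(2*M)) = |zp| + |zp|/(2*M) := by field_simp
        linarith
      have h2 : Real.log t ≤ Real.log (|zp| * (1+1/(2*M))) := Real.log_le_log ht0 h1
      rw [Real.log_mul hzp0.ne' (by positivity : (0:ℝ) < 1+1/(2*M)).ne'] at h2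
      have h3 : -|Real.log t| ≤ Real.log t := neg_abs_le _
      linarith
    have e4 := mul_le_mul_of_nonneg_left hlogzp (by linarith : (0:ℝ) ≤ 4*M)
    have e1 : KB ≤ |KB| := le_abs_self _
    have hCKB : |KB| ≤ C := by
      rw [hC]; have := abs_nonneg KA; linarith
    refine le_trans hB1 ?_
    linarith [e4, e1, hCKB, e3, eC, hKB, abs_nonneg (Real.log t)]
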